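/- Let K be a complete discrete valuation field of characteristic p and L/K a p^2-cyclic Artin-Schreier-Witt extension given by (a_0^p, a_1^p) -_w (a_0, a_1) = (α_0, α_1) ∈ W_2(K). If (β_0, β_1) ∈ W_2(K) satisfies β_0 = c^{-1} α_0 for nonzero c ∈ F_p and corresponds to (b_0, b_1) with a_0 = c b_0, then (a_1 - c b_1)^p - (a_1 - c b_1) = α_1 - c β_1; in particular K(a_1 - c b_1)/K is a p-cyclic (or trivial) Artin-Schreier extension. -/

import Mathlib

open MvPolynomial

namespace Stmt16Aux

variable (p : ℕ) [hp : Fact p.Prime]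

lemma carry_dvd : (C (p : ℤ) : MvPolynomial (Fin 2) ℤ) ∣
    (X 0 ^ p - X 1 ^ p - (X 0 - X 1) ^ p) := by
  rw [MvPolynomial.C_dvd_iff_zmod]
  rw [map_sub, map_sub, map_pow, map_pow, map_pow, map_sub, map_X, map_X]
  rw [sub_pow_char]
  ring

noncomputable def Ecarry : MvPolynomial (Fin 2) ℤ := (carry_dvd p).choose

lemma Ecarry_spec :
    (X 0 ^ p - X 1 ^ p - (X 0 - X 1) ^ p : MvPolynomial (Fin 2) ℤ) =
      C (p : ℤ) * Ecarry p := (carry_dvd p).choose_spec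

/-- homogeneity of the carry polynomial, at the polynomial level -/
lemma Ecarry_homog (n : ℕ) :
    bind₁ ![(n : MvPolynomial (Fin 2) ℤ) * X 0, (n : MvPolynomial (Fin 2) ℤ) * X 1] (Ecarry p)
      = (n : MvPolynomial (Fin 2) ℤ) ^ p * Ecarry p := by
  have hC : (C (p : ℤ) : MvPolynomial (Fin 2) ℤ) ≠ 0 := by
    simp [hp.out.ne_zero]
  apply mul_left_cancel₀ hC
  have h1 : (C (p : ℤ) : MvPolynomial (Fin 2) ℤ) *
      bind₁ ![(n : MvPolynomial (Fin 2) ℤ) * X 0, (n : MvPolynomial (Fin 2) ℤ) * X 1] (Ecarry p)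
      = bind₁ ![(n : MvPolynomial (Fin 2) ℤ) * X 0, (n : MvPolynomial (Fin 2) ℤ) * X 1]
          (C (p : ℤ) * Ecarry p) := by
    rw [map_mul, algHom_C, MvPolynomial.algebraMap_eq]
  rw [h1, ← Ecarry_spec]
  simp only [map_sub, map_pow, bind₁_X_right, Matrix.cons_val_zero, Matrix.cons_val_one,
    Matrix.head_cons]
  have h2 : ((n : MvPolynomial (Fin 2) ℤ) * X 0) ^ p - ((n : MvPolynomial (Fin 2) ℤ) * X 1) ^ p -
      ((n : MvPolynomial (Fin 2) ℤ) * X 0 - (n : MvPolynomial (Fin 2) ℤ) * X 1) ^ p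
      = (n : MvPolynomial (Fin 2) ℤ) ^ p * (X 0 ^ p - X 1 ^ p - (X 0 - X 1) ^ p) := by
    rw [← mul_sub, mul_pow, mul_pow, mul_pow, mul_sub]
    ring
  rw [h2, Ecarry_spec]
  ring

/-- homogeneity, evaluated in any commutative ring -/
lemma aeval_Ecarry_smul {R : Type*} [CommRing R] (n : ℕ) (x y : R) :
    aeval ![(n : R) * x, (n : R) * y] (Ecarry p)
      = (n : R) ^ p * aeval ![x, y] (Ecarry p) := by
  have := congrArg (aeval (![x, y] : Fin 2 → R)) (Ecarry_homog p n)
  rw [aeval_bind₁, map_mul, map_pow, map_natCast] at this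
  convert this using 2
  ext i
  fin_cases i <;> simp


lemma ringHom_aeval {S T : Type*} [CommRing S] [CommRing T] (f : S →+* T) (v : Fin 2 → S)
    (E : MvPolynomial (Fin 2) ℤ) : f (aeval v E) = aeval (fun i => f (v i)) E := by
  rw [map_aeval]
  exact eval₂Hom_congr (RingHom.ext_int _ _) rfl rfl

lemma ghost_one {S : Type*} [CommRing S] (z : WittVector p S) :
    WittVector.ghostComponent 1 z = z.coeff 0 ^ p + (p : S) * z.coeff 1 := by
  rw [WittVector.ghostComponent_apply, wittPolynomial_one]
  simp [add_comm]

lemma coeff_zero_sub {S : Type*} [CommRing S] (x y : WittVector p S) :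
    (x - y).coeff 0 = x.coeff 0 - y.coeff 0 := by
  have := map_sub (WittVector.constantCoeff (p := p) (R := S)) x y
  simpa using this

lemma sub_coeff_one_q {S : Type*} [CommRing S] [Algebra ℚ S] (x y : WittVector p S) :
    (x - y).coeff 1 = x.coeff 1 - y.coeff 1 + aeval ![x.coeff 0, y.coeff 0] (Ecarry p) := by
  have hpu : IsUnit (p : S) := by
    have h1 : IsUnit (p : ℚ) := isUnit_iff_ne_zero.2 (by exact_mod_cast hp.out.ne_zero)
    simpa using h1.map (algebraMap ℚ S)
  apply hpu.mul_left_cancel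
  have hg := map_sub (WittVector.ghostComponent (p := p) 1) x y
  rw [ghost_one, ghost_one, ghost_one, coeff_zero_sub] at hg
  have hE : (p : S) * aeval ![x.coeff 0, y.coeff 0] (Ecarry p)
      = x.coeff 0 ^ p - y.coeff 0 ^ p - (x.coeff 0 - y.coeff 0) ^ p := by
    have h := congrArg (aeval (![x.coeff 0, y.coeff 0] : Fin 2 → S)) (Ecarry_spec p)
    simp only [map_sub, map_pow, map_mul, aeval_C, aeval_X, Matrix.cons_val_zero,
      Matrix.cons_val_one, Matrix.head_cons, algebraMap_int_eq, eq_intCast,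
      Int.cast_natCast, map_natCast] at h
    exact_mod_cast h.symm
  linear_combination hg - hE

/-- the universal Witt vectors -/
noncomputable def XU : WittVector p (MvPolynomial (Fin 2 × ℕ) ℤ) :=
  WittVector.mk p fun n => X (0, n)

noncomputable def YU : WittVector p (MvPolynomial (Fin 2 × ℕ) ℤ) :=
  WittVector.mk p fun n => X (1, n)

lemma sub_coeff_one_univ :
    (XU p - YU p).coeff 1 = (XU p).coeff 1 - (YU p).coeff 1 +
      aeval ![(XU p).coeff 0, (YU p).coeff 0] (Ecarry p) := by
  have hι : Function.Injective
      (MvPolynomial.map (Int.castRingHom ℚ) : MvPolynomial (Fin 2 × ℕ) ℤ →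
        MvPolynomial (Fin 2 × ℕ) ℚ) :=
    MvPolynomial.map_injective _ Int.cast_injective
  apply hι
  set ι := (MvPolynomial.map (Int.castRingHom ℚ) :
    MvPolynomial (Fin 2 × ℕ) ℤ →+* MvPolynomial (Fin 2 × ℕ) ℚ)
  have h1 : ι ((XU p - YU p).coeff 1)
      = (WittVector.map ι (XU p) - WittVector.map ι (YU p)).coeff 1 := by
    rw [← map_sub (WittVector.map ι), WittVector.map_coeff]
  rw [h1, sub_coeff_one_q, map_add, map_sub]
  erw [ringHom_aeval]
  simp only [WittVector.map_coeff]
  congr 1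
  congr 1
  ext i
  fin_cases i <;> simp [WittVector.map_coeff]

lemma sub_coeff_one {R : Type*} [CommRing R] (x y : WittVector p R) :
    (x - y).coeff 1 = x.coeff 1 - y.coeff 1 + aeval ![x.coeff 0, y.coeff 0] (Ecarry p) := by
  let φ : MvPolynomial (Fin 2 × ℕ) ℤ →+* R :=
    (aeval (fun q : Fin 2 × ℕ => (![x.coeff, y.coeff] : Fin 2 → ℕ → R) q.1 q.2)).toRingHom
  have hX : WittVector.map φ (XU p) = x := by
    ext n
    rw [WittVector.map_coeff]
    simp [XU, φ, WittVector.coeff_mk]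
  have hY : WittVector.map φ (YU p) = y := by
    ext n
    rw [WittVector.map_coeff]
    simp [YU, φ, WittVector.coeff_mk]
  have h1 : (x - y).coeff 1 = φ ((XU p - YU p).coeff 1) := by
    rw [← WittVector.map_coeff, map_sub (WittVector.map φ), hX, hY]
  rw [h1, sub_coeff_one_univ, map_add, map_sub]
  erw [ringHom_aeval]
  rw [← hX, ← hY]
  simp only [WittVector.map_coeff]
  congr 1
  congr 1
  ext i
  fin_cases i <;> simp [WittVector.map_coeff]


lemma trunc_sub_coeff {S : Type*} [CommRing S] (x y : TruncatedWittVector p 2 S) (i : Fin 2) :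
    (x - y).coeff i = (x.out - y.out).coeff i := by
  show (WittVector.truncateFun 2 (x.out - y.out)).coeff i = _
  rw [WittVector.coeff_truncateFun]

lemma out_mk_coeff {S : Type*} [CommRing S] (v : Fin 2 → S) (i : Fin 2) :
    (TruncatedWittVector.mk p v).out.coeff i = v i := by
  rw [TruncatedWittVector.coeff_out, TruncatedWittVector.coeff_mk]

lemma mk_sub_mk_coeff_one {S : Type*} [CommRing S] (v w : Fin 2 → S) :
    (TruncatedWittVector.mk p v - TruncatedWittVector.mk p w).coeff 1 =
      v 1 - w 1 + aeval ![v 0, w 0] (Ecarry p) := by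
  rw [trunc_sub_coeff]
  have h1 : ((1 : Fin 2) : ℕ) = 1 := rfl
  rw [h1, sub_coeff_one]
  have h0 : ∀ u : Fin 2 → S, (TruncatedWittVector.mk p u).out.coeff 1 = u 1 := by
    intro u
    have := out_mk_coeff p u 1
    rwa [h1] at this
  have h0' : ∀ u : Fin 2 → S, (TruncatedWittVector.mk p u).out.coeff 0 = u 0 := by
    intro u
    have := out_mk_coeff p u 0
    rwa [show ((0 : Fin 2) : ℕ) = 0 from rfl] at this
  rw [h0, h0, h0', h0']

end Stmt16Aux

open Stmt16Aux


/-- Witt vector computation: if `(a_0^p,a_1^p) -_w (a_0,a_1) = (α_0,α_1)` and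
`(b_0^p,b_1^p) -_w (b_0,b_1) = (β_0,β_1)` in `W_2`, with `β_0 = c⁻¹ α_0`
(i.e. `c β_0 = α_0`) and `a_0 = c b_0` for nonzero `c ∈ 𝔽_p`, then
`(a_1 - c b_1)^p - (a_1 - c b_1) = α_1 - c β_1`, so `K(a_1 - c b_1)/K` is a
`p`-cyclic (or trivial) Artin–Schreier extension. -/
theorem stmt16 (p : ℕ) [Fact p.Prime] {K L : Type*} [Field K] [Field L]
    [Algebra K L] [CharP K p]
    (a0 a1 b0 b1 : L) (α0 α1 β0 β1 : K) (c : ZMod p) (hc : c ≠ 0)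
    (hA : TruncatedWittVector.mk p ![a0 ^ p, a1 ^ p] -
        TruncatedWittVector.mk p ![a0, a1] =
        TruncatedWittVector.mk p ![algebraMap K L α0, algebraMap K L α1])
    (hB : TruncatedWittVector.mk p ![b0 ^ p, b1 ^ p] -
        TruncatedWittVector.mk p ![b0, b1] =
        TruncatedWittVector.mk p ![algebraMap K L β0, algebraMap K L β1])
    (hβ0 : (c.val : K) * β0 = α0)
    (hab : a0 = (c.val : L) * b0) :
    (a1 - (c.val : L) * b1) ^ p - (a1 - (c.val : L) * b1) =
      algebraMap K L (α1 - (c.val : K) * β1) := by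
  haveI : CharP L p := charP_of_injective_algebraMap (algebraMap K L).injective p
  have hcp : ((c.val : L)) ^ p = (c.val : L) := by
    have h1 : c.val ^ p ≡ c.val [MOD p] := by
      rw [← ZMod.natCast_eq_natCast_iff]
      push_cast
      rw [ZMod.natCast_val, ZMod.cast_id, ZMod.pow_card]
    calc ((c.val : L)) ^ p = ((c.val ^ p : ℕ) : L) := by push_cast; ring
      _ = (c.val : L) := CharP.natCast_eq_natCast' L p h1
  have hA1 := congrArg (TruncatedWittVector.coeff (1 : Fin 2)) hA
  have hB1 := congrArg (TruncatedWittVector.coeff (1 : Fin 2)) hB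
  rw [mk_sub_mk_coeff_one, TruncatedWittVector.coeff_mk] at hA1 hB1
  simp only [Matrix.cons_val_zero, Matrix.cons_val_one, Matrix.head_cons] at hA1 hB1
  have hE : aeval ![a0 ^ p, a0] (Ecarry p) = (c.val : L) * aeval ![b0 ^ p, b0] (Ecarry p) := by
    have ha0p : a0 ^ p = (c.val : L) * b0 ^ p := by rw [hab, mul_pow, hcp]
    rw [ha0p, hab, aeval_Ecarry_smul, hcp]
  rw [map_sub, map_mul, map_natCast, ← hA1, ← hB1, sub_pow_char, mul_pow, hcp, hE]
  ring
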